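/- Let F/F_q be a field extension and P a finite p-group where q is a power of the prime p. Every unit of the Laurent series group ring F((t^{-1}))[P] factors uniquely as a product of a monic element and an element of F[t][P]^×, where the monic elements are defined as the union over n ∈ Z of t^n·(1 + t^{-1}F[P][[t^{-1}]]). -/

import Mathlib

/-- An element of `R((t⁻¹))`, viewed as a Laurent series in the variable `u = t⁻¹`
(so `t^n = u^{-n}`), is *monic* if it lies in `⋃_{n ∈ ℤ} t^n·(1 + t⁻¹·R[[t⁻¹]])`,
i.e. if for some `m ∈ ℤ` its coefficient at `u^m` is `1` and all coefficients at
exponents `< m` vanish. -/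
def IsMonicLaurent {R : Type*} [CommRing R] (x : LaurentSeries R) : Prop :=
  ∃ m : ℤ, x.coeff m = 1 ∧ ∀ k < m, x.coeff k = 0

/-- An element of `R((t⁻¹))` (Laurent series in `u = t⁻¹`) lies in the polynomial ring
`R[t]` iff all its coefficients at positive powers of `u` vanish. -/
def IsPolyLaurent {R : Type*} [CommRing R] (x : LaurentSeries R) : Prop :=
  ∀ k : ℤ, 0 < k → x.coeff k = 0

namespace Stmt5Proof

open HahnSeries Finset

variable {A : Type*} [CommRing A]

lemma poly_one : IsPolyLaurent (1 : LaurentSeries A) := by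
  intro k hk
  rw [HahnSeries.coeff_one, if_neg (by omega)]

lemma poly_mul {x y : LaurentSeries A} (hx : IsPolyLaurent x) (hy : IsPolyLaurent y) :
    IsPolyLaurent (x * y) := by
  intro k hk
  rw [HahnSeries.coeff_mul]
  refine Finset.sum_eq_zero fun ij hij => ?_
  rw [Finset.mem_addAntidiagonal] at hij
  rcases lt_or_ge 0 ij.1 with h | h
  · rw [hx _ h, zero_mul]
  · rw [hy _ (by omega), mul_zero]

lemma poly_add {x y : LaurentSeries A} (hx : IsPolyLaurent x) (hy : IsPolyLaurent y) :
    IsPolyLaurent (x + y) := by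
  intro k hk
  rw [HahnSeries.coeff_add, hx _ hk, hy _ hk, add_zero]

lemma poly_pow {x : LaurentSeries A} (hx : IsPolyLaurent x) (n : ℕ) :
    IsPolyLaurent (x ^ n) := by
  induction n with
  | zero => simpa using poly_one
  | succ n ih => rw [pow_succ]; exact poly_mul ih hx

lemma poly_sum {ι : Type*} {s : Finset ι} {f : ι → LaurentSeries A}
    (hf : ∀ i ∈ s, IsPolyLaurent (f i)) : IsPolyLaurent (∑ i ∈ s, f i) := by
  classical
  induction s using Finset.induction_on with
  | empty => intro k hk; simp
  | insert _ _ hne ih =>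
      rw [Finset.sum_insert hne]
      exact poly_add (hf _ (Finset.mem_insert_self _ _))
        (ih fun i hi => hf i (Finset.mem_insert_of_mem hi))

lemma monic_one [Nontrivial A] : IsMonicLaurent (1 : LaurentSeries A) :=
  ⟨0, by simp, fun k hk => by rw [HahnSeries.coeff_one, if_neg (by omega)]⟩

lemma pair_eq {i j a b : ℤ} (h1 : i = a) (h2 : i + j = a + b) : (i, j) = (a, b) := by
  rw [Prod.mk.injEq]; exact ⟨h1, by omega⟩

lemma pair_eq' {i j a b : ℤ} (h1 : j = b) (h2 : i + j = a + b) : (i, j) = (a, b) := by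
  rw [Prod.mk.injEq]; exact ⟨by omega, h1⟩

/-- key computation: the coefficient of a product is a single term provided all other
terms of the convolution vanish. -/
lemma mul_coeff_eq_single {x y : LaurentSeries A} {a b k : ℤ} (hab : a + b = k)
    (h : ∀ i j : ℤ, i + j = k → (i, j) ≠ (a, b) → x.coeff i * y.coeff j = 0) :
    (x * y).coeff k = x.coeff a * y.coeff b := by
  classical
  rw [HahnSeries.coeff_mul]
  rcases eq_or_ne (x.coeff a) 0 with hxa | hxa
  · rw [hxa, zero_mul]
    refine Finset.sum_eq_zero fun ij hij => ?_
    rw [Finset.mem_addAntidiagonal] at hij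
    rcases eq_or_ne (ij.1, ij.2) (a, b) with he | he
    · have h1 : ij.1 = a := (Prod.mk.injEq _ _ _ _ ▸ he).1
      rw [h1, hxa, zero_mul]
    · exact h ij.1 ij.2 hij.2.2 he
  rcases eq_or_ne (y.coeff b) 0 with hyb | hyb
  · rw [hyb, mul_zero]
    refine Finset.sum_eq_zero fun ij hij => ?_
    rw [Finset.mem_addAntidiagonal] at hij
    rcases eq_or_ne (ij.1, ij.2) (a, b) with he | he
    · have h2 : ij.2 = b := (Prod.mk.injEq _ _ _ _ ▸ he).2
      rw [h2, hyb, mul_zero]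
    · exact h ij.1 ij.2 hij.2.2 he
  refine Finset.sum_eq_single (a, b) ?_ ?_
  · intro ij hij hne
    rw [Finset.mem_addAntidiagonal] at hij
    exact h ij.1 ij.2 hij.2.2 hne
  · intro hnm
    exfalso
    exact hnm (Finset.mem_addAntidiagonal.mpr ⟨hxa, hyb, hab⟩)

lemma mul_coeff_eq_zero {x y : LaurentSeries A} {k : ℤ}
    (h : ∀ i j : ℤ, i + j = k → x.coeff i * y.coeff j = 0) :
    (x * y).coeff k = 0 := by
  rw [HahnSeries.coeff_mul]
  refine Finset.sum_eq_zero fun ij hij => ?_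
  rw [Finset.mem_addAntidiagonal] at hij
  exact h ij.1 ij.2 hij.2.2

lemma monic_mul [Nontrivial A] {x y : LaurentSeries A} (hx : IsMonicLaurent x)
    (hy : IsMonicLaurent y) : IsMonicLaurent (x * y) := by
  obtain ⟨a, ha1, ha0⟩ := hx
  obtain ⟨b, hb1, hb0⟩ := hy
  refine ⟨a + b, ?_, ?_⟩
  · rw [mul_coeff_eq_single rfl ?_, ha1, hb1, one_mul]
    intro i j hij hne
    rcases lt_trichotomy i a with h | h | h
    · rw [ha0 _ h, zero_mul]
    · exact absurd (pair_eq h hij) hne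
    · rw [hb0 _ (by omega), mul_zero]
  · intro k hk
    refine mul_coeff_eq_zero fun i j hij => ?_
    rcases lt_or_ge i a with h | h
    · rw [ha0 _ h, zero_mul]
    · rw [hb0 _ (by omega), mul_zero]

lemma coeff_mul_right_mem (I : Ideal A) {y : LaurentSeries A} (hy : ∀ k, y.coeff k ∈ I)
    (x : LaurentSeries A) (k : ℤ) : (x * y).coeff k ∈ I := by
  rw [HahnSeries.coeff_mul]
  exact Ideal.sum_mem _ fun ij _ => I.mul_mem_left _ (hy ij.2)

lemma coeff_mul_mem_mul {I J : Ideal A} {x y : LaurentSeries A} (hx : ∀ k, x.coeff k ∈ I)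
    (hy : ∀ k, y.coeff k ∈ J) (k : ℤ) : (x * y).coeff k ∈ I * J := by
  rw [HahnSeries.coeff_mul]
  exact Ideal.sum_mem _ fun ij _ => Ideal.mul_mem_mul (hx ij.1) (hy ij.2)

lemma coeff_pow_mem {I : Ideal A} {x : LaurentSeries A} (hx : ∀ k, x.coeff k ∈ I) :
    ∀ n : ℕ, 1 ≤ n → ∀ k, (x ^ n).coeff k ∈ I ^ n := by
  intro n
  induction n with
  | zero => omega
  | succ n ih =>
      intro _ k
      rcases Nat.eq_zero_or_pos n with h | h
      · subst h; rw [pow_one, pow_one]; exact hx k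
      · rw [pow_succ, pow_succ]
        exact coeff_mul_mem_mul (ih h) hx k

lemma pow_eq_zero_of_coeff {I : Ideal A} {x : LaurentSeries A} (hx : ∀ k, x.coeff k ∈ I)
    {n : ℕ} (hn : 1 ≤ n) (hI : I ^ n = ⊥) : x ^ n = 0 := by
  apply HahnSeries.coeff_injective
  funext k
  have := coeff_pow_mem hx n hn k
  rw [hI] at this
  simpa using this

lemma geom_inv {ν : LaurentSeries A} {n : ℕ} (hν : ν ^ n = 0) :
    (1 + ν) * (∑ i ∈ Finset.range n, (-ν) ^ i) = 1 := by
  have h := geom_sum_mul (-ν) n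
  have h2 : (-ν) ^ n = 0 := by
    rw [show -ν = (-1 : LaurentSeries A) * ν from by ring, mul_pow, hν, mul_zero]
  rw [h2] at h
  linear_combination -h

/-- the part of a Laurent series supported in positive exponents. -/
def posPart (x : LaurentSeries A) : LaurentSeries A where
  coeff k := if 0 < k then x.coeff k else 0
  isPWO_support' := x.isPWO_support.mono (by
    intro k hk
    by_cases h0 : (0 : ℤ) < k
    · simpa [Function.mem_support, if_pos h0] using hk
    · simp [Function.mem_support, if_neg h0] at hk)

lemma posPart_coeff (x : LaurentSeries A) (k : ℤ) :
    (posPart x).coeff k = if 0 < k then x.coeff k else 0 := rfl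

/-- The main iterated factorization lemma: `1 + ε` with coefficients in a
nilpotent ideal factors as (monic) × (polynomial unit with polynomial inverse). -/
lemma key_IT0 [Nontrivial A] :
    ∀ (c : ℕ) (J : Ideal A), J ^ (2 ^ c) = ⊥ → ∀ ε : LaurentSeries A, (∀ i, ε.coeff i ∈ J) →
    ∃ m g h : LaurentSeries A, IsMonicLaurent m ∧ IsPolyLaurent g ∧ IsPolyLaurent h ∧
      g * h = 1 ∧ 1 + ε = m * g := by
  intro c
  induction c with
  | zero =>
      intro J hJ ε hε
      rw [pow_zero, pow_one] at hJ
      have hε0 : ε = 0 := by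
        apply HahnSeries.coeff_injective
        funext k
        have := hε k
        rw [hJ] at this
        simpa using this
      exact ⟨1, 1, 1, monic_one, poly_one, poly_one, one_mul 1, by rw [hε0, add_zero, one_mul]⟩
  | succ c ih =>
      intro J hJ ε hε
      set εp := posPart ε with hεp_def
      set εl := ε - εp with hεl_def
      have hεpJ : ∀ i, εp.coeff i ∈ J := by
        intro i
        rw [posPart_coeff]
        split
        · exact hε i
        · exact J.zero_mem
      have hεlJ : ∀ i, εl.coeff i ∈ J := by
        intro i
        rw [hεl_def, HahnSeries.coeff_sub]
        exact Ideal.sub_mem _ (hε i) (hεpJ i)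
      have hεl_poly : IsPolyLaurent εl := by
        intro k hk
        rw [hεl_def, HahnSeries.coeff_sub, posPart_coeff, if_pos hk, sub_self]
      have hone : (1 : ℕ) ≤ 2 ^ (c + 1) := Nat.one_le_two_pow
      have hpp : εp ^ (2 ^ (c + 1)) = 0 := pow_eq_zero_of_coeff hεpJ hone hJ
      have hpl : εl ^ (2 ^ (c + 1)) = 0 := pow_eq_zero_of_coeff hεlJ hone hJ
      set W : LaurentSeries A := ∑ i ∈ Finset.range (2 ^ (c + 1)), (-εp) ^ i with hW_def
      set V : LaurentSeries A := ∑ i ∈ Finset.range (2 ^ (c + 1)), (-εl) ^ i with hV_def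
      have hW : (1 + εp) * W = 1 := geom_inv hpp
      have hV : (1 + εl) * V = 1 := geom_inv hpl
      have hV_poly : IsPolyLaurent V :=
        poly_sum fun i _ => poly_pow (fun k hk => by
          rw [HahnSeries.coeff_neg, hεl_poly _ hk, neg_zero]) i
      set η := εp * εl with hη_def
      have hη : ∀ i, η.coeff i ∈ J ^ 2 := by
        intro i
        rw [pow_two]
        exact coeff_mul_mem_mul hεpJ hεlJ i
      set ε₃ := -(W * V * η) with hε₃_def
      have hε₃ : ∀ i, ε₃.coeff i ∈ J ^ 2 := by
        intro i
        rw [hε₃_def, HahnSeries.coeff_neg]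
        exact neg_mem (coeff_mul_right_mem _ hη _ _)
      have hJ2 : (J ^ 2) ^ (2 ^ c) = ⊥ := by
        rw [← pow_mul, show 2 * 2 ^ c = 2 ^ (c + 1) by rw [pow_succ]; ring]
        exact hJ
      obtain ⟨m₂, g₂, h₂, hm₂, hg₂, hh₂, hgh₂, hfac₂⟩ := ih (J ^ 2) hJ2 ε₃ hε₃
      have hεsum : ε = εp + εl := by rw [hεl_def]; ring
      have key : (1 + εp) * (1 + εl) * (1 + ε₃) = 1 + ε := by
        have e1 : (1 + εp) * (1 + εl) = 1 + ε + η := by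
          rw [hη_def]
          linear_combination -hεsum
        calc (1 + εp) * (1 + εl) * (1 + ε₃)
            = (1 + ε + η) - ((1 + εp) * W) * ((1 + εl) * V) * η := by
              rw [← e1, hε₃_def]; ring
          _ = 1 + ε := by rw [hW, hV]; ring
      refine ⟨(1 + εp) * m₂, (1 + εl) * g₂, V * h₂, ?_, ?_, ?_, ?_, ?_⟩
      · refine monic_mul ⟨0, ?_, ?_⟩ hm₂
        · rw [HahnSeries.coeff_add, posPart_coeff]
          simp
        · intro k hk
          rw [HahnSeries.coeff_add, HahnSeries.coeff_one, if_neg (by omega), posPart_coeff,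
            if_neg (by omega), add_zero]
      · exact poly_mul (poly_add poly_one hεl_poly) hg₂
      · exact poly_mul hV_poly hh₂
      · calc (1 + εl) * g₂ * (V * h₂) = ((1 + εl) * V) * (g₂ * h₂) := by ring
          _ = 1 := by rw [hV, hgh₂, one_mul]
      · rw [← key, hfac₂]; ring

lemma single_mul_coeff {r : A} {x : LaurentSeries A} {d k : ℤ} :
    (HahnSeries.single d r * x).coeff k = r * x.coeff (k - d) := by
  have := HahnSeries.coeff_single_mul_add (r := r) (x := x) (a := k - d) (b := d)
  rwa [sub_add_cancel] at this

lemma ofPowerSeries_coeff_neg (φ : PowerSeries A) {k : ℤ} (hk : k < 0) :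
    (HahnSeries.ofPowerSeries ℤ A φ).coeff k = 0 := by
  rw [HahnSeries.ofPowerSeries_apply]
  refine HahnSeries.embDomain_notin_range ?_
  rintro ⟨n, hn⟩
  change (n : ℤ) = k at hn
  omega

/-- units coefficient convolution: the product of two series whose first unit
coefficients occur at `a` and `b` has a unit coefficient at `a + b`. -/
lemma coeff_unit_add [Nontrivial A] (hA : ∀ a : A, IsUnit a ∨ IsNilpotent a)
    {x y : LaurentSeries A} {a b : ℤ}
    (hxa : IsUnit (x.coeff a)) (hyb : IsUnit (y.coeff b))
    (hx : ∀ i < a, ¬ IsUnit (x.coeff i)) (hy : ∀ j < b, ¬ IsUnit (y.coeff j)) :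
    IsUnit ((x * y).coeff (a + b)) := by
  classical
  rw [HahnSeries.coeff_mul]
  have hmem : ((a, b) : ℤ × ℤ) ∈
      Finset.antidiagonal x.isPWO_support y.isPWO_support (a + b) :=
    Finset.mem_addAntidiagonal.mpr ⟨hxa.ne_zero, hyb.ne_zero, rfl⟩
  rw [← Finset.add_sum_erase _ _ hmem]
  have hnil : IsNilpotent (∑ ij ∈ (Finset.antidiagonal x.isPWO_support y.isPWO_support
      (a + b)).erase (a, b), x.coeff ij.1 * y.coeff ij.2) := by
    refine isNilpotent_sum fun ij hij => ?_
    rw [Finset.mem_erase, Finset.mem_addAntidiagonal] at hij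
    obtain ⟨hne, _, _, hsum⟩ := hij
    rcases lt_trichotomy ij.1 a with h | h | h
    · have := (hA (x.coeff ij.1)).resolve_left (hx _ h)
      exact (Commute.all _ _).isNilpotent_mul_right this
    · exact absurd (pair_eq h hsum) hne
    · have := (hA (y.coeff ij.2)).resolve_left (hy _ (by omega))
      exact (Commute.all _ _).isNilpotent_mul_left this
  exact IsNilpotent.isUnit_add_left_of_commute hnil (hxa.mul hyb) (Commute.all _ _)

lemma nilpotent_one_false [Nontrivial A] (h : IsNilpotent (1 : A)) : False := by
  obtain ⟨n, hn⟩ := h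
  rw [one_pow] at hn
  exact one_ne_zero hn

/-- The core uniqueness lemma. -/
lemma poly_unit_eq_one [Nontrivial A] (hA : ∀ a : A, IsUnit a ∨ IsNilpotent a)
    {m m' w w' : LaurentSeries A}
    (hm : IsMonicLaurent m) (hm' : IsMonicLaurent m')
    (hw : IsPolyLaurent w) (hw' : IsPolyLaurent w') (hww' : w * w' = 1)
    (hmw : m = m' * w) (hmw' : m' = m * w') : w = 1 := by
  classical
  obtain ⟨a, ha1, ha0⟩ := hm
  obtain ⟨b, hb1, hb0⟩ := hm'
  -- coefficient 0 of w is a unit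
  have h00 : w.coeff 0 * w'.coeff 0 = 1 := by
    have h := mul_coeff_eq_single (x := w) (y := w') (a := 0) (b := 0) (k := 0) (add_zero 0) ?_
    · rw [hww'] at h
      rw [← h, HahnSeries.coeff_one, if_pos rfl]
    · intro i j hij hne
      rcases lt_trichotomy i 0 with h | h | h
      · rw [hw' _ (by omega), mul_zero]
      · exact absurd (pair_eq h hij) hne
      · rw [hw _ h, zero_mul]
  have hu0 : IsUnit (w.coeff 0) := IsUnit.of_mul_eq_one _ h00
  have hu0' : IsUnit (w'.coeff 0) := IsUnit.of_mul_eq_one _ (by rw [mul_comm]; exact h00)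
  -- negative coefficients of w and w' are not units
  have hmin : ∀ (z z' : LaurentSeries A), IsPolyLaurent z → IsPolyLaurent z' →
      z * z' = 1 → IsUnit (z.coeff 0) → IsUnit (z'.coeff 0) →
      ∀ k < 0, ¬ IsUnit (z.coeff k) := by
    intro z z' hz hz' hzz' hz0 hz0' k hk hku
    set T : Set ℤ := {i | IsUnit (z.coeff i)} with hT_def
    set T' : Set ℤ := {i | IsUnit (z'.coeff i)} with hT'_def
    have hTsub : T ⊆ z.support := fun i hi => hi.ne_zero
    have hT'sub : T' ⊆ z'.support := fun i hi => hi.ne_zero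
    have hTwf : T.IsWF := z.isWF_support.subset hTsub
    have hT'wf : T'.IsWF := z'.isWF_support.subset hT'sub
    have hTne : T.Nonempty := ⟨0, hz0⟩
    have hT'ne : T'.Nonempty := ⟨0, hz0'⟩
    have hk0mem : hTwf.min hTne ∈ T := hTwf.min_mem hTne
    have hk1mem : hT'wf.min hT'ne ∈ T' := hT'wf.min_mem hT'ne
    have hk0le : hTwf.min hTne ≤ 0 := hTwf.min_le hTne hz0
    have hk1le : hT'wf.min hT'ne ≤ 0 := hT'wf.min_le hT'ne hz0'
    have hunit : IsUnit ((z * z').coeff (hTwf.min hTne + hT'wf.min hT'ne)) := by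
      refine coeff_unit_add hA hk0mem hk1mem ?_ ?_
      · intro i hi hiu
        exact hTwf.not_lt_min hTne hiu hi
      · intro j hj hju
        exact hT'wf.not_lt_min hT'ne hju hj
    rw [hzz', HahnSeries.coeff_one] at hunit
    have hk0k1 : hTwf.min hTne + hT'wf.min hT'ne = 0 := by
      by_contra hne
      rw [if_neg hne] at hunit
      exact not_isUnit_zero hunit
    exact hTwf.not_lt_min hTne hku (by omega)
  have hwneg_nu : ∀ k < 0, ¬ IsUnit (w.coeff k) := hmin w w' hw hw' hww' hu0 hu0'
  have hw'neg_nu : ∀ k < 0, ¬ IsUnit (w'.coeff k) :=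
    hmin w' w hw' hw (by rw [mul_comm]; exact hww') hu0' hu0
  have hwneg_nil : ∀ k < 0, IsNilpotent (w.coeff k) :=
    fun k hk => (hA _).resolve_left (hwneg_nu k hk)
  have hw'neg_nil : ∀ k < 0, IsNilpotent (w'.coeff k) :=
    fun k hk => (hA _).resolve_left (hw'neg_nu k hk)
  -- a = b
  have hab : ∀ (z z' : LaurentSeries A) (a' b' : ℤ), z.coeff a' = 1 →
      (∀ k < b', z'.coeff k = 0) → ∀ v : LaurentSeries A,
      (∀ k < 0, IsNilpotent (v.coeff k)) → z = z' * v → ¬ a' < b' := by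
    intro z z' a' b' hz1 hz'0 v hvnil hzv hab
    have hnil : IsNilpotent (z.coeff a') := by
      rw [hzv, HahnSeries.coeff_mul]
      refine isNilpotent_sum fun ij hij => ?_
      rw [Finset.mem_addAntidiagonal] at hij
      rcases lt_or_ge ij.1 b' with h | h
      · rw [hz'0 _ h, zero_mul]
        exact IsNilpotent.zero
      · exact (Commute.all _ _).isNilpotent_mul_left (hvnil ij.2 (by omega))
    rw [hz1] at hnil
    exact nilpotent_one_false hnil
  have hba : b ≤ a := not_lt.mp (hab m m' a b ha1 hb0 w hwneg_nil hmw)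
  have hab' : a ≤ b := not_lt.mp (hab m' m b a hb1 ha0 w' hw'neg_nil hmw')
  have haeb : a = b := le_antisymm hab' hba
  subst haeb
  -- negative coefficients of w vanish
  have hwneg : ∀ k < 0, w.coeff k = 0 := by
    intro k hk
    by_contra hne
    set T2 : Set ℤ := {i | w.coeff i ≠ 0 ∧ i < 0} with hT2_def
    have hT2sub : T2 ⊆ w.support := fun i hi => hi.1
    have hT2wf : T2.IsWF := w.isWF_support.subset hT2sub
    have hT2ne : T2.Nonempty := ⟨k, hne, hk⟩
    have hemem : hT2wf.min hT2ne ∈ T2 := hT2wf.min_mem hT2ne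
    have heneg : hT2wf.min hT2ne < 0 := hemem.2
    have hcoeff : m.coeff (a + hT2wf.min hT2ne) = m'.coeff a * w.coeff (hT2wf.min hT2ne) := by
      rw [hmw]
      refine mul_coeff_eq_single rfl ?_
      intro i j hij hne'
      rcases lt_trichotomy i a with h | h | h
      · rw [hb0 _ h, zero_mul]
      · exact absurd (pair_eq h hij) hne'
      · have hj : j < hT2wf.min hT2ne := by omega
        have hj0 : w.coeff j = 0 := by
          by_contra hj0
          exact hT2wf.not_lt_min hT2ne ⟨hj0, by omega⟩ hj
        rw [hj0, mul_zero]
    rw [ha0 _ (by omega), hb1, one_mul] at hcoeff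
    exact hemem.1 hcoeff.symm
  have hw0 : w.coeff 0 = 1 := by
    have hcoeff : m.coeff a = m'.coeff a * w.coeff 0 := by
      rw [hmw]
      refine mul_coeff_eq_single (add_zero a) ?_
      intro i j hij hne'
      rcases lt_trichotomy j 0 with h | h | h
      · rw [hwneg _ h, mul_zero]
      · exact absurd (pair_eq' h (by omega)) hne'
      · rw [hw _ h, mul_zero]
    rw [ha1, hb1, one_mul] at hcoeff
    exact hcoeff.symm
  apply HahnSeries.coeff_injective
  funext k
  rcases lt_trichotomy k 0 with h | h | h
  · rw [hwneg _ h, HahnSeries.coeff_one, if_neg (by omega)]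
  · rw [h, hw0, HahnSeries.coeff_one, if_pos rfl]
  · rw [hw _ h, HahnSeries.coeff_one, if_neg (by omega)]

section GroupAlgebra

variable {F : Type*} [Field F] {P : Type*} [CommGroup P] [Finite P]

lemma unit_or_nilpotent {p : ℕ} (hp : p.Prime) [CharP F p]
    (hP : ∃ k : ℕ, Nat.card P = p ^ k) :
    ∀ a : MonoidAlgebra F P, IsUnit a ∨ IsNilpotent a := by
  haveI : Fact p.Prime := ⟨hp⟩
  haveI : CharP (MonoidAlgebra F P) p :=
    charP_of_injective_algebraMap (algebraMap F (MonoidAlgebra F P)).injective p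
  obtain ⟨k, hk⟩ := hP
  set aug : MonoidAlgebra F P →ₐ[F] F := MonoidAlgebra.lift F F P 1 with haug
  have haug_of : ∀ g : P, aug (MonoidAlgebra.of F P g) = 1 := fun g => by
    rw [haug, MonoidAlgebra.lift_of]; rfl
  have hnilgen : ∀ g : P, IsNilpotent (MonoidAlgebra.of F P g - 1) := by
    intro g
    refine ⟨p ^ k, ?_⟩
    rw [sub_pow_char_pow, ← map_pow, ← hk, pow_card_eq_one', map_one, one_pow, sub_self]
  have hker : ∀ a : MonoidAlgebra F P,
      IsNilpotent (a - algebraMap F (MonoidAlgebra F P) (aug a)) := by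
    intro a
    induction a using MonoidAlgebra.induction_on with
    | of g => rw [haug_of g, map_one]; exact hnilgen g
    | add f g hf hg =>
        have h := (Commute.all _ _).isNilpotent_add hf hg
        have he : f + g - algebraMap F (MonoidAlgebra F P) (aug (f + g))
            = (f - algebraMap F (MonoidAlgebra F P) (aug f))
              + (g - algebraMap F (MonoidAlgebra F P) (aug g)) := by
          rw [map_add, map_add]; ring
        rw [he]; exact h
    | smul r f hf =>
        have he : r • f - algebraMap F (MonoidAlgebra F P) (aug (r • f))
            = algebraMap F (MonoidAlgebra F P) r
              * (f - algebraMap F (MonoidAlgebra F P) (aug f)) := by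
          rw [map_smul, smul_eq_mul, map_mul, Algebra.smul_def]; ring
        rw [he]
        exact (Commute.all _ _).isNilpotent_mul_left hf
  intro a
  rcases eq_or_ne (aug a) 0 with h0 | h0
  · right
    have h := hker a
    rwa [h0, map_zero, sub_zero] at h
  · left
    have hu : IsUnit (algebraMap F (MonoidAlgebra F P) (aug a)) :=
      (h0.isUnit).map (algebraMap F (MonoidAlgebra F P))
    have h2 := IsNilpotent.isUnit_add_left_of_commute (hker a) hu (Commute.all _ _)
    have h3 : algebraMap F (MonoidAlgebra F P) (aug a)
        + (a - algebraMap F (MonoidAlgebra F P) (aug a)) = a := by ring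
    rwa [h3] at h2

lemma nilradical_nilpotent :
    ∃ n : ℕ, (nilradical (MonoidAlgebra F P)) ^ n = ⊥ := by
  have h1 : Module.Finite F (P →₀ F) := inferInstance
  have h2 : Module.Finite F (MonoidAlgebra F P) := inferInstance
  have h3 : IsNoetherian F (MonoidAlgebra F P) := isNoetherian_of_isNoetherianRing_of_finite F _
  have h4 : IsNoetherianRing (MonoidAlgebra F P) :=
    isNoetherianRing_iff.mpr (isNoetherian_of_tower F h3)
  obtain ⟨n, hn⟩ := IsNoetherianRing.isNilpotent_nilradical (MonoidAlgebra F P)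
  exact ⟨n, hn⟩

end GroupAlgebra

/-- The existence half over a general coefficient ring. -/
lemma existence [Nontrivial A] (hA : ∀ a : A, IsUnit a ∨ IsNilpotent a)
    {n : ℕ} (hN : (nilradical A) ^ n = ⊥) (x : (LaurentSeries A)ˣ) :
    ∃ m : LaurentSeries A, ∃ g : (LaurentSeries A)ˣ,
      IsMonicLaurent m ∧ IsPolyLaurent (g : LaurentSeries A) ∧
      IsPolyLaurent ((g⁻¹ : (LaurentSeries A)ˣ) : LaurentSeries A) ∧
      (x : LaurentSeries A) = m * (g : LaurentSeries A) := by
  classical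
  set X := (x : LaurentSeries A) with hX
  have hex : ∃ k : ℤ, IsUnit (X.coeff k) := by
    by_contra hno
    push_neg at hno
    have hco : ∀ k, X.coeff k ∈ nilradical A :=
      fun k => mem_nilradical.mpr ((hA _).resolve_left (hno k))
    have hI : (nilradical A) ^ (max n 1) = ⊥ :=
      le_bot_iff.mp (hN ▸ Ideal.pow_le_pow_right (le_max_left n 1))
    have hx0 : X ^ (max n 1) = 0 := pow_eq_zero_of_coeff hco (le_max_right n 1) hI
    have : IsUnit ((0 : LaurentSeries A)) := hx0 ▸ (x.isUnit.pow (max n 1))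
    exact not_isUnit_zero this
  set S : Set ℤ := {k | IsUnit (X.coeff k)} with hS
  have hSsub : S ⊆ X.support := fun i hi => hi.ne_zero
  have hSwf : S.IsWF := X.isWF_support.subset hSsub
  have hSne : S.Nonempty := hex
  set d : ℤ := hSwf.min hSne with hd
  have hdu : IsUnit (X.coeff d) := hSwf.min_mem hSne
  obtain ⟨u, hu⟩ := hdu
  set f : PowerSeries A := PowerSeries.mk (fun m => (↑u⁻¹ : A) * X.coeff (d + m)) with hf
  have hf0 : PowerSeries.constantCoeff f = 1 := by
    rw [hf, PowerSeries.constantCoeff_mk, Nat.cast_zero, add_zero, ← hu, Units.inv_mul]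
  have hfu : IsUnit f := PowerSeries.isUnit_iff_constantCoeff.mpr (by rw [hf0]; exact isUnit_one)
  obtain ⟨fi, hfi⟩ := isUnit_iff_exists_inv.mp hfu
  set Q : LaurentSeries A := HahnSeries.ofPowerSeries ℤ A f with hQ
  set Q' : LaurentSeries A := HahnSeries.ofPowerSeries ℤ A fi with hQ'
  have hQQ' : Q * Q' = 1 := by rw [hQ, hQ', ← map_mul, hfi, map_one]
  have hQco : ∀ m : ℕ, Q.coeff (m : ℤ) = (↑u⁻¹ : A) * X.coeff (d + m) := fun m => by
    rw [hQ, HahnSeries.ofPowerSeries_apply_coeff, hf, PowerSeries.coeff_mk]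
  have hQneg : ∀ k : ℤ, k < 0 → Q.coeff k = 0 := fun k hk => ofPowerSeries_coeff_neg _ hk
  have hQ0 : Q.coeff 0 = 1 := by
    have h := hQco 0
    rw [Nat.cast_zero, add_zero, ← hu, Units.inv_mul] at h
    exact h
  set M0 : LaurentSeries A := HahnSeries.single d 1 * Q with hM0
  have hM0monic : IsMonicLaurent M0 := by
    refine ⟨d, ?_, ?_⟩
    · rw [hM0, single_mul_coeff, sub_self, hQ0, one_mul]
    · intro k hk
      rw [hM0, single_mul_coeff, hQneg _ (by omega), mul_zero]
  set ε : LaurentSeries A := X - HahnSeries.single d (↑u : A) * Q with hε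
  have hεco : ∀ k, ε.coeff k ∈ nilradical A := by
    intro k
    rw [hε, HahnSeries.coeff_sub, single_mul_coeff]
    rcases lt_or_ge k d with h | h
    · rw [hQneg _ (by omega), mul_zero, sub_zero]
      refine mem_nilradical.mpr ((hA _).resolve_left ?_)
      intro hk'
      exact hSwf.not_lt_min hSne hk' h
    · have hkd : k = d + ((k - d).toNat : ℤ) := by omega
      rw [hkd, add_sub_cancel_left, hQco]
      rw [← mul_assoc, Units.mul_inv, one_mul, sub_self]
      exact zero_mem _
  obtain ⟨n0, hn0⟩ : ∃ n0 : ℕ, (nilradical A) ^ (2 ^ n0) = ⊥ := by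
    refine ⟨n, le_bot_iff.mp ?_⟩
    calc (nilradical A) ^ (2 ^ n) ≤ (nilradical A) ^ n :=
          Ideal.pow_le_pow_right (Nat.le_of_lt (Nat.lt_two_pow_self (n := n)))
      _ = ⊥ := hN
  set ε₁ : LaurentSeries A :=
    (HahnSeries.single (0 : ℤ) (↑u⁻¹ : A) * Q' * HahnSeries.single (-d) (1 : A)) * ε with hε₁
  have hε₁co : ∀ k, ε₁.coeff k ∈ nilradical A := fun k => coeff_mul_right_mem _ hεco _ k
  obtain ⟨m₂, g₂, h₂, hm₂, hg₂, hh₂, hgh₂, hfac₂⟩ := key_IT0 n0 _ hn0 ε₁ hε₁co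
  have e1 : HahnSeries.single d (1 : A) * HahnSeries.single (-d) (1 : A)
      = (1 : LaurentSeries A) := by
    rw [HahnSeries.single_mul_single, add_neg_cancel, one_mul, HahnSeries.single_zero_one]
  have e2 : HahnSeries.single (0 : ℤ) (↑u : A) * HahnSeries.single (0 : ℤ) (↑u⁻¹ : A)
      = (1 : LaurentSeries A) := by
    rw [HahnSeries.single_mul_single, add_zero, Units.mul_inv, HahnSeries.single_zero_one]
  have hsd : HahnSeries.single d (↑u : A)
      = HahnSeries.single d (1 : A) * HahnSeries.single (0 : ℤ) (↑u : A) := by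
    rw [HahnSeries.single_mul_single, add_zero, one_mul]
  have hε' : X = HahnSeries.single d (↑u : A) * Q + ε := by rw [hε]; ring
  have hXfac : X = M0 * HahnSeries.single (0 : ℤ) (↑u : A) * (1 + ε₁) := by
    have expand : M0 * HahnSeries.single (0 : ℤ) (↑u : A) * (1 + ε₁)
        = HahnSeries.single d (↑u : A) * Q
          + (HahnSeries.single d (1 : A) * HahnSeries.single (-d) (1 : A))
            * ((HahnSeries.single (0 : ℤ) (↑u : A)) * (HahnSeries.single (0 : ℤ) (↑u⁻¹ : A)))
            * (Q * Q') * ε := by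
      rw [hM0, hε₁, hsd]; ring
    rw [expand, e1, e2, hQQ']
    rw [one_mul, one_mul, one_mul]
    exact hε'
  refine ⟨M0 * m₂,
    ⟨HahnSeries.single (0 : ℤ) (↑u : A) * g₂, HahnSeries.single (0 : ℤ) (↑u⁻¹ : A) * h₂, ?_, ?_⟩,
    monic_mul hM0monic hm₂, ?_, ?_, ?_⟩
  · calc HahnSeries.single (0 : ℤ) (↑u : A) * g₂ * (HahnSeries.single (0 : ℤ) (↑u⁻¹ : A) * h₂)
        = (HahnSeries.single (0 : ℤ) (↑u : A) * HahnSeries.single (0 : ℤ) (↑u⁻¹ : A))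
          * (g₂ * h₂) := by ring
      _ = 1 := by rw [e2, hgh₂, one_mul]
  · calc HahnSeries.single (0 : ℤ) (↑u⁻¹ : A) * h₂ * (HahnSeries.single (0 : ℤ) (↑u : A) * g₂)
        = (HahnSeries.single (0 : ℤ) (↑u : A) * HahnSeries.single (0 : ℤ) (↑u⁻¹ : A))
          * (g₂ * h₂) := by ring
      _ = 1 := by rw [e2, hgh₂, one_mul]
  · exact poly_mul (fun k hk => HahnSeries.coeff_single_of_ne (by omega)) hg₂
  · exact poly_mul (fun k hk => HahnSeries.coeff_single_of_ne (by omega)) hh₂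
  · show X = M0 * m₂ * (HahnSeries.single (0 : ℤ) (↑u : A) * g₂)
    rw [hXfac, hfac₂]; ring

end Stmt5Proof

theorem stmt_5 {Fq F : Type*} [Field Fq] [Fintype Fq] [Field F] [Algebra Fq F]
    [Algebra.IsAlgebraic Fq F] {p : ℕ} (hp : p.Prime) [CharP Fq p]
    (P : Type*) [CommGroup P] [Finite P] (hP : ∃ k : ℕ, Nat.card P = p ^ k)
    (x : (LaurentSeries (MonoidAlgebra F P))ˣ) :
    ∃! mg : LaurentSeries (MonoidAlgebra F P) × (LaurentSeries (MonoidAlgebra F P))ˣ,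
      IsMonicLaurent mg.1 ∧ IsPolyLaurent (mg.2 : LaurentSeries (MonoidAlgebra F P)) ∧
      IsPolyLaurent ((mg.2⁻¹ : (LaurentSeries (MonoidAlgebra F P))ˣ) :
        LaurentSeries (MonoidAlgebra F P)) ∧
      (x : LaurentSeries (MonoidAlgebra F P)) = mg.1 * (mg.2 : LaurentSeries (MonoidAlgebra F P)) := by
  classical
  haveI : CharP F p := charP_of_injective_algebraMap (algebraMap Fq F).injective p
  have hA := Stmt5Proof.unit_or_nilpotent (F := F) (P := P) hp hP
  obtain ⟨n, hN⟩ := Stmt5Proof.nilradical_nilpotent (F := F) (P := P)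
  obtain ⟨m, g, hm, hg, hgi, hx⟩ := Stmt5Proof.existence hA hN x
  refine ⟨(m, g), ⟨hm, hg, hgi, hx⟩, ?_⟩
  rintro ⟨m', g'⟩ ⟨hm', hg', hgi', hx'⟩
  dsimp only at hm' hg' hgi' hx'
  have heq : m' * (g' : LaurentSeries (MonoidAlgebra F P))
      = m * (g : LaurentSeries (MonoidAlgebra F P)) := by rw [← hx', ← hx]
  have hww' : ((g : LaurentSeries (MonoidAlgebra F P)) * ((g'⁻¹ : _ˣ) : LaurentSeries (MonoidAlgebra F P)))
      * ((g' : LaurentSeries (MonoidAlgebra F P)) * ((g⁻¹ : _ˣ) : LaurentSeries (MonoidAlgebra F P))) = 1 := by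
    rw [← Units.val_mul g g'⁻¹, ← Units.val_mul g' g⁻¹, ← Units.val_mul (g * g'⁻¹) (g' * g⁻¹),
      show (g * g'⁻¹) * (g' * g⁻¹) = 1 by group, Units.val_one]
  have hmw : m' = m * ((g : LaurentSeries (MonoidAlgebra F P))
      * ((g'⁻¹ : _ˣ) : LaurentSeries (MonoidAlgebra F P))) := by
    calc m' = m' * ((g' : LaurentSeries (MonoidAlgebra F P))
          * ((g'⁻¹ : _ˣ) : LaurentSeries (MonoidAlgebra F P))) := by
          rw [Units.mul_inv, mul_one]
      _ = m' * (g' : LaurentSeries (MonoidAlgebra F P))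
          * ((g'⁻¹ : _ˣ) : LaurentSeries (MonoidAlgebra F P)) := (mul_assoc _ _ _).symm
      _ = m * (g : LaurentSeries (MonoidAlgebra F P))
          * ((g'⁻¹ : _ˣ) : LaurentSeries (MonoidAlgebra F P)) := by rw [heq]
      _ = _ := mul_assoc _ _ _
  have hmw' : m = m' * ((g' : LaurentSeries (MonoidAlgebra F P))
      * ((g⁻¹ : _ˣ) : LaurentSeries (MonoidAlgebra F P))) := by
    calc m = m * ((g : LaurentSeries (MonoidAlgebra F P))
          * ((g⁻¹ : _ˣ) : LaurentSeries (MonoidAlgebra F P))) := by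
          rw [Units.mul_inv, mul_one]
      _ = m * (g : LaurentSeries (MonoidAlgebra F P))
          * ((g⁻¹ : _ˣ) : LaurentSeries (MonoidAlgebra F P)) := (mul_assoc _ _ _).symm
      _ = m' * (g' : LaurentSeries (MonoidAlgebra F P))
          * ((g⁻¹ : _ˣ) : LaurentSeries (MonoidAlgebra F P)) := by rw [heq]
      _ = _ := mul_assoc _ _ _
  have hw1 : (g : LaurentSeries (MonoidAlgebra F P))
      * ((g'⁻¹ : _ˣ) : LaurentSeries (MonoidAlgebra F P)) = 1 :=
    Stmt5Proof.poly_unit_eq_one hA hm' hm (Stmt5Proof.poly_mul hg hgi')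
      (Stmt5Proof.poly_mul hg' hgi) hww' hmw hmw'
  have hgg : g' = g := by
    have hval : ((g * g'⁻¹ : (LaurentSeries (MonoidAlgebra F P))ˣ) : LaurentSeries (MonoidAlgebra F P))
        = ((1 : (LaurentSeries (MonoidAlgebra F P))ˣ) : LaurentSeries (MonoidAlgebra F P)) := by
      rw [Units.val_mul, hw1, Units.val_one]
    exact (mul_inv_eq_one.mp (Units.ext hval)).symm
  have hmm : m' = m := by rw [hmw, hw1, mul_one]
  exact Prod.ext hmm hgg
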